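/- Suppose A = {A_ij} and B = {B_ij} are families of complex matrices normal in the coupled sense, both irreducible in the coupled sense, and S_i are n_i×m_i matrices with A_ij S_j = S_i B_ij for all i,j ∈ I. Then either S_i = 0 for all i, or there is a single positive real λ such that S_i S_i* = λ I_{n_i} for all i; i.e., each S_i is √λ times a unitary matrix (and m_i = n_i). -/

import Mathlib

open Matrix

/-- `A` is normal in the coupled sense. -/
def CoupledNormal {I : Type*} {n : I → ℕ}
    (A : ∀ i j : I, Matrix (Fin (n i)) (Fin (n j)) ℂ) : Prop :=
  ∀ i j, (A i j)ᴴ * A i j = A j i * (A j i)ᴴ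

/-- `A` is irreducible in the coupled sense. -/
def CoupledIrreducible {I : Type*} {n : I → ℕ}
    (A : ∀ i j : I, Matrix (Fin (n i)) (Fin (n j)) ℂ) : Prop :=
  ¬ ∃ U : ∀ i : I, Submodule ℂ (Fin (n i) → ℂ),
      (∃ i, U i ≠ ⊥) ∧ (∃ i, U i ≠ ⊤) ∧
      ∀ i j, (U j).map (A i j).mulVecLin ≤ U i

private lemma trace_mul_conjT {a b : ℕ} (M : Matrix (Fin a) (Fin b) ℂ) :
    (M * Mᴴ).trace = ((∑ x, ∑ y, Complex.normSq (M x y) : ℝ) : ℂ) := by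
  simp [Matrix.trace, Matrix.mul_apply, Matrix.diag, Matrix.conjTranspose_apply,
    Complex.mul_conj]

private lemma eq_zero_of_traces {a b c d : ℕ} (M : Matrix (Fin a) (Fin b) ℂ)
    (N : Matrix (Fin c) (Fin d) ℂ)
    (h : (M * Mᴴ).trace + (N * Nᴴ).trace = 0) : M = 0 := by
  rw [trace_mul_conjT, trace_mul_conjT, ← Complex.ofReal_add, Complex.ofReal_eq_zero] at h
  have hM : (0:ℝ) ≤ ∑ x, ∑ y, Complex.normSq (M x y) :=
    Finset.sum_nonneg fun x _ => Finset.sum_nonneg fun y _ => Complex.normSq_nonneg _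
  have hN : (0:ℝ) ≤ ∑ x, ∑ y, Complex.normSq (N x y) :=
    Finset.sum_nonneg fun x _ => Finset.sum_nonneg fun y _ => Complex.normSq_nonneg _
  have hM0 : ∑ x, ∑ y, Complex.normSq (M x y) = 0 := by linarith
  ext i j
  have h1 := (Finset.sum_eq_zero_iff_of_nonneg
    (fun x _ => Finset.sum_nonneg fun y _ => Complex.normSq_nonneg (M x y))).mp hM0 i
    (Finset.mem_univ i)
  have h2 := (Finset.sum_eq_zero_iff_of_nonneg
    (fun y _ => Complex.normSq_nonneg (M i y))).mp h1 j (Finset.mem_univ j)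
  simpa [Complex.normSq_eq_zero] using h2

private lemma trace_transfer {a b c d : ℕ} (X : Matrix (Fin a) (Fin b) ℂ)
    (S1 : Matrix (Fin b) (Fin c) ℂ) (S2 : Matrix (Fin a) (Fin d) ℂ)
    (Y : Matrix (Fin d) (Fin c) ℂ) (h : X * S1 = S2 * Y) :
    (Xᴴ * X * (S1 * S1ᴴ)).trace = (Y * Yᴴ * (S2ᴴ * S2)).trace := by
  have e1 : (Xᴴ * X * (S1 * S1ᴴ)).trace = ((X * S1) * (X * S1)ᴴ).trace := by
    rw [Matrix.mul_assoc, Matrix.trace_mul_comm]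
    congr 1
    simp only [conjTranspose_mul, Matrix.mul_assoc]
  have e2 : ((S2 * Y) * (S2 * Y)ᴴ).trace = (Y * Yᴴ * (S2ᴴ * S2)).trace := by
    have e : (S2 * Y) * (S2 * Y)ᴴ = S2 * (Y * (Yᴴ * S2ᴴ)) := by
      simp only [conjTranspose_mul, Matrix.mul_assoc]
    rw [e, Matrix.trace_mul_comm]
    congr 1
    simp only [Matrix.mul_assoc]
  rw [e1, h, e2]

private lemma traceMM {p q r s : ℕ}
    (A : Matrix (Fin p) (Fin q) ℂ) (A' : Matrix (Fin q) (Fin p) ℂ)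
    (B : Matrix (Fin r) (Fin s) ℂ) (B' : Matrix (Fin s) (Fin r) ℂ)
    (Si : Matrix (Fin p) (Fin r) ℂ) (Sj : Matrix (Fin q) (Fin s) ℂ)
    (hA' : A'ᴴ * A' = A * Aᴴ) (hB : Bᴴ * B = B' * B'ᴴ)
    (h1 : A * Sj = Si * B) (h2 : A' * Si = Sj * B') :
    ((Aᴴ * Si - Sj * Bᴴ) * (Aᴴ * Si - Sj * Bᴴ)ᴴ).trace
      = 2 * (Bᴴ * B * (Sjᴴ * Sj)).trace - 2 * (Aᴴ * A * (Sj * Sjᴴ)).trace := by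
  have expand : (Aᴴ * Si - Sj * Bᴴ) * (Aᴴ * Si - Sj * Bᴴ)ᴴ
      = Aᴴ * (Si * (Siᴴ * A)) - Aᴴ * (Si * (B * Sjᴴ))
        - (Sj * (Bᴴ * (Siᴴ * A)) - Sj * (Bᴴ * (B * Sjᴴ))) := by
    simp only [conjTranspose_sub, conjTranspose_mul, conjTranspose_conjTranspose,
      Matrix.sub_mul, Matrix.mul_sub, Matrix.mul_assoc]
    abel
  rw [expand, Matrix.trace_sub, Matrix.trace_sub, Matrix.trace_sub]
  have eT1 : (Aᴴ * (Si * (Siᴴ * A))).trace = (Bᴴ * B * (Sjᴴ * Sj)).trace := by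
    have e : Aᴴ * (Si * (Siᴴ * A)) = (Aᴴ * (Si * Siᴴ)) * A := by
      simp only [Matrix.mul_assoc]
    rw [e, Matrix.trace_mul_comm]
    have e2 : A * (Aᴴ * (Si * Siᴴ)) = A * Aᴴ * (Si * Siᴴ) := by
      simp only [Matrix.mul_assoc]
    rw [e2, ← hA', trace_transfer A' Si Sj B' h2, ← hB]
  have eT2 : (Aᴴ * (Si * (B * Sjᴴ))).trace = (Aᴴ * A * (Sj * Sjᴴ)).trace := by
    have e : Aᴴ * (Si * (B * Sjᴴ)) = Aᴴ * ((Si * B) * Sjᴴ) := by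
      simp only [Matrix.mul_assoc]
    rw [e, ← h1]
    congr 1
    simp only [Matrix.mul_assoc]
  have eT3 : (Sj * (Bᴴ * (Siᴴ * A))).trace = (Aᴴ * A * (Sj * Sjᴴ)).trace := by
    have hadj : Sjᴴ * Aᴴ = Bᴴ * Siᴴ := by
      have := congrArg conjTranspose h1
      simpa only [conjTranspose_mul] using this
    have e : Sj * (Bᴴ * (Siᴴ * A)) = (Sj * Sjᴴ) * (Aᴴ * A) := by
      rw [← Matrix.mul_assoc Bᴴ Siᴴ A, ← hadj]
      simp only [Matrix.mul_assoc]
    rw [e, Matrix.trace_mul_comm]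
  have eT4 : (Sj * (Bᴴ * (B * Sjᴴ))).trace = (Bᴴ * B * (Sjᴴ * Sj)).trace := by
    rw [Matrix.trace_mul_comm]
    have e : Bᴴ * (B * Sjᴴ) * Sj = Bᴴ * B * (Sjᴴ * Sj) := by
      simp only [Matrix.mul_assoc]
    rw [e]
  rw [eT1, eT2, eT3, eT4]
  ring

private lemma coupledFP {p q r s : ℕ}
    (A : Matrix (Fin p) (Fin q) ℂ) (A' : Matrix (Fin q) (Fin p) ℂ)
    (B : Matrix (Fin r) (Fin s) ℂ) (B' : Matrix (Fin s) (Fin r) ℂ)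
    (Si : Matrix (Fin p) (Fin r) ℂ) (Sj : Matrix (Fin q) (Fin s) ℂ)
    (hA : Aᴴ * A = A' * A'ᴴ) (hA' : A'ᴴ * A' = A * Aᴴ)
    (hB : Bᴴ * B = B' * B'ᴴ) (hB' : B'ᴴ * B' = B * Bᴴ)
    (h1 : A * Sj = Si * B) (h2 : A' * Si = Sj * B') :
    Aᴴ * Si = Sj * Bᴴ := by
  have t1 := traceMM A A' B B' Si Sj hA' hB h1 h2
  have t2 := traceMM A' A B' B Sj Si hA hB' h2 h1
  have e1 : (B'ᴴ * B' * (Siᴴ * Si)).trace = (Aᴴ * A * (Sj * Sjᴴ)).trace := by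
    rw [hB']
    exact (trace_transfer A Sj Si B h1).symm
  have e2 : (A'ᴴ * A' * (Si * Siᴴ)).trace = (Bᴴ * B * (Sjᴴ * Sj)).trace := by
    rw [trace_transfer A' Si Sj B' h2, ← hB]
  have hsum : ((Aᴴ * Si - Sj * Bᴴ) * (Aᴴ * Si - Sj * Bᴴ)ᴴ).trace
      + ((A'ᴴ * Sj - Si * B'ᴴ) * (A'ᴴ * Sj - Si * B'ᴴ)ᴴ).trace = 0 := by
    rw [t1, t2, e1, e2]; ring
  have := eq_zero_of_traces _ _ hsum
  have := sub_eq_zero.mp this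
  exact this

private lemma matrix_eq_zero_of_mulVecLin' {a b : ℕ} {M : Matrix (Fin a) (Fin b) ℂ}
    (h : M.mulVecLin = 0) : M = 0 := by
  ext x y
  have h2 := LinearMap.congr_fun h (Pi.single y 1)
  simp only [Matrix.mulVecLin_apply, Matrix.mulVec_single_one, LinearMap.zero_apply] at h2
  simpa using congrFun h2 x

/-- Coupled-normal version of Schur's Lemma for coupled-irreducible families: either all
`S i` vanish, or there is one positive real `l` with `S i S i* = l • I` for all `i`
(so each `S i` is `√l` times a unitary matrix, and `m i = n i`). -/
theorem stmt_17 {I : Type*} {n m : I → ℕ}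
    (A : ∀ i j : I, Matrix (Fin (n i)) (Fin (n j)) ℂ)
    (B : ∀ i j : I, Matrix (Fin (m i)) (Fin (m j)) ℂ)
    (hAN : CoupledNormal A) (hBN : CoupledNormal B)
    (hAirr : CoupledIrreducible A) (hBirr : CoupledIrreducible B)
    (S : ∀ i : I, Matrix (Fin (n i)) (Fin (m i)) ℂ)
    (hint : ∀ i j, A i j * S j = S i * B i j) :
    (∀ i, S i = 0) ∨
    (∃ l : ℝ, 0 < l ∧ ∀ i, m i = n i ∧
      S i * (S i)ᴴ = (l : ℂ) • (1 : Matrix (Fin (n i)) (Fin (n i)) ℂ)) := by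
  by_cases hS0 : ∀ i, S i = 0
  · exact Or.inl hS0
  push_neg at hS0
  obtain ⟨i₀, hi₀⟩ := hS0
  have hFP : ∀ i j, (A i j)ᴴ * S i = S j * (B i j)ᴴ := fun i j =>
    coupledFP (A i j) (A j i) (B i j) (B j i) (S i) (S j)
      (hAN i j) (hAN j i) (hBN i j) (hBN j i) (hint i j) (hint j i)
  have hComm : ∀ i j, A i j * (S j * (S j)ᴴ) = (S i * (S i)ᴴ) * A i j := by
    intro i j
    have hadj : (S i)ᴴ * A i j = B i j * (S j)ᴴ := by
      have := congrArg conjTranspose (hFP i j)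
      simpa only [conjTranspose_mul, conjTranspose_conjTranspose] using this
    calc A i j * (S j * (S j)ᴴ) = (A i j * S j) * (S j)ᴴ := by rw [Matrix.mul_assoc]
      _ = (S i * B i j) * (S j)ᴴ := by rw [hint]
      _ = S i * (B i j * (S j)ᴴ) := by rw [Matrix.mul_assoc]
      _ = S i * ((S i)ᴴ * A i j) := by rw [hadj]
      _ = (S i * (S i)ᴴ) * A i j := by rw [Matrix.mul_assoc]
  -- surjectivity of all S i
  have hRange : ∀ i, LinearMap.range (S i).mulVecLin = ⊤ := by
    by_contra hc
    push_neg at hc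
    apply hAirr
    refine ⟨fun i => LinearMap.range (S i).mulVecLin, ⟨i₀, ?_⟩, hc, ?_⟩
    · intro hbot
      exact hi₀ (matrix_eq_zero_of_mulVecLin' (LinearMap.range_eq_bot.mp hbot))
    · intro i j v hv
      simp only [Submodule.mem_map, LinearMap.mem_range] at hv ⊢
      obtain ⟨w, ⟨x, rfl⟩, rfl⟩ := hv
      refine ⟨(B i j).mulVecLin x, ?_⟩
      simp only [Matrix.mulVecLin_apply, Matrix.mulVec_mulVec, ← hint i j]
  -- injectivity of all S i
  have hKer : ∀ i, LinearMap.ker (S i).mulVecLin = ⊥ := by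
    by_contra hc
    push_neg at hc
    apply hBirr
    refine ⟨fun i => LinearMap.ker (S i).mulVecLin, hc, ⟨i₀, ?_⟩, ?_⟩
    · intro htop
      exact hi₀ (matrix_eq_zero_of_mulVecLin' (LinearMap.ker_eq_top.mp htop))
    · intro i j v hv
      simp only [Submodule.mem_map, LinearMap.mem_ker, Matrix.mulVecLin_apply] at hv ⊢
      obtain ⟨x, hx, rfl⟩ := hv
      rw [Matrix.mulVec_mulVec, ← hint i j, ← Matrix.mulVec_mulVec, hx, Matrix.mulVec_zero]
  -- pick a nonzero entry of S i₀
  have hab : ∃ a b, S i₀ a b ≠ 0 := by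
    by_contra hc
    push_neg at hc
    exact hi₀ (by ext a b; simpa using hc a b)
  obtain ⟨a, b, hab⟩ := hab
  have hHerm : (S i₀ * (S i₀)ᴴ).IsHermitian := Matrix.isHermitian_mul_conjTranspose_self _
  set l : ℝ := hHerm.eigenvalues a with hl
  set v : Fin (n i₀) → ℂ := (WithLp.equiv 2 _) (hHerm.eigenvectorBasis a) with hvdef
  have hv : (S i₀ * (S i₀)ᴴ) *ᵥ v = (l : ℂ) • v := by
    have h := hHerm.mulVec_eigenvectorBasis a
    calc (S i₀ * (S i₀)ᴴ) *ᵥ v = hHerm.eigenvalues a • v := h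
      _ = (l : ℂ) • v := by
          funext k
          simp only [Pi.smul_apply, Complex.real_smul, smul_eq_mul, hl]
  have hvne : v ≠ 0 := by
    intro h0
    exact hHerm.eigenvectorBasis.orthonormal.ne_zero a
      ((WithLp.equiv 2 _).injective (h0.trans (WithLp.ofLp_zero (p := 2) (V := Fin (n i₀) → ℂ)).symm))
  -- eigenspace family is coupled invariant, hence all full
  have hU : ∀ i, LinearMap.ker ((S i * (S i)ᴴ - (l:ℂ) • 1).mulVecLin) = ⊤ := by
    by_contra hc
    push_neg at hc
    apply hAirr
    refine ⟨fun i => LinearMap.ker ((S i * (S i)ᴴ - (l:ℂ) • 1).mulVecLin), ⟨i₀, ?_⟩, hc, ?_⟩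
    · intro hbot
      apply hvne
      have hvmem : v ∈ LinearMap.ker ((S i₀ * (S i₀)ᴴ - (l:ℂ) • 1).mulVecLin) := by
        simp only [LinearMap.mem_ker, Matrix.mulVecLin_apply, Matrix.sub_mulVec, hv,
          Matrix.smul_mulVec, Matrix.one_mulVec, sub_self]
      have hbot' : LinearMap.ker ((S i₀ * (S i₀)ᴴ - (l:ℂ) • 1).mulVecLin) = ⊥ := hbot
      rw [hbot'] at hvmem
      simpa using hvmem
    · intro i j w hw
      simp only [Submodule.mem_map, LinearMap.mem_ker, Matrix.mulVecLin_apply] at hw ⊢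
      obtain ⟨x, hx, rfl⟩ := hw
      have key : (S i * (S i)ᴴ - (l:ℂ) • 1) * A i j = A i j * (S j * (S j)ᴴ - (l:ℂ) • 1) := by
        rw [Matrix.sub_mul, Matrix.mul_sub, ← hComm i j]
        congr 1
        rw [Matrix.smul_mul, Matrix.mul_smul, Matrix.one_mul, Matrix.mul_one]
      rw [Matrix.mulVec_mulVec, key, ← Matrix.mulVec_mulVec, hx, Matrix.mulVec_zero]
  have hPeq : ∀ i, S i * (S i)ᴴ = (l:ℂ) • 1 := by
    intro i
    have h0 : (S i * (S i)ᴴ - (l:ℂ) • 1) = 0 :=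
      matrix_eq_zero_of_mulVecLin' (LinearMap.ker_eq_top.mp (hU i))
    exact sub_eq_zero.mp h0
  -- positivity of l
  have hdiag := congrFun (congrFun (hPeq i₀) a) a
  have hsum : ((∑ c, Complex.normSq (S i₀ a c) : ℝ) : ℂ) = (l : ℂ) := by
    have hone : ((l:ℂ) • (1 : Matrix (Fin (n i₀)) (Fin (n i₀)) ℂ)) a a = (l : ℂ) := by
      simp [Matrix.smul_apply, Matrix.one_apply_eq]
    rw [← hone, ← hdiag]
    simp [Matrix.mul_apply, Matrix.conjTranspose_apply, Complex.mul_conj]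
  have hlsum : l = ∑ c, Complex.normSq (S i₀ a c) := by
    exact_mod_cast hsum.symm
  have hlpos : 0 < l := by
    rw [hlsum]
    have h1 : Complex.normSq (S i₀ a b) ≤ ∑ c, Complex.normSq (S i₀ a c) :=
      Finset.single_le_sum (fun c _ => Complex.normSq_nonneg _) (Finset.mem_univ b)
    have h2 : 0 < Complex.normSq (S i₀ a b) := Complex.normSq_pos.mpr hab
    linarith
  refine Or.inr ⟨l, hlpos, fun i => ⟨?_, hPeq i⟩⟩
  have hinj : Function.Injective (S i).mulVecLin := LinearMap.ker_eq_bot.mp (hKer i)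
  have h1 : m i ≤ n i := by
    have := LinearMap.finrank_le_finrank_of_injective hinj
    simpa [Module.finrank_fin_fun] using this
  have h2 : n i ≤ m i := by
    have := (S i).mulVecLin.finrank_range_le
    rw [hRange i] at this
    simpa [Module.finrank_fin_fun, finrank_top] using this
  omega
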